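/- For every t < 0 and every θ ∈ ℝ, the Angenent oval parametrization satisfies the implicit paperclip equation: cos(x(θ,t)) = e^t · cosh(y(θ,t)). -/

import Mathlib

open Real

/-- `a(t) := (e^{-2t} - 1)^{-1/2}` for the Angenent oval. -/
noncomputable def angenentA (t : ℝ) : ℝ := Real.sqrt ((Real.exp (-2 * t) - 1)⁻¹)

/-- The `x`-coordinate of the Angenent oval in the turning angle parametrization. -/
noncomputable def angenentX (θ t : ℝ) : ℝ :=
  Real.arctan (Real.sin θ / Real.sqrt (Real.cos θ ^ 2 + angenentA t ^ 2))

/-- The `y`-coordinate of the Angenent oval in the turning angle parametrization. -/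
noncomputable def angenentY (θ t : ℝ) : ℝ :=
  -t + Real.log ((Real.sqrt (Real.cos θ ^ 2 + angenentA t ^ 2) - Real.cos θ) /
    Real.sqrt (angenentA t ^ 2 + 1))

/-- For every `t < 0` and every `θ`, the Angenent oval parametrization satisfies the
implicit paperclip equation `cos (x(θ,t)) = e^t · cosh (y(θ,t))`. -/
theorem angenent_paperclip_equation (t θ : ℝ) (ht : t < 0) :
    Real.cos (angenentX θ t) = Real.exp t * Real.cosh (angenentY θ t) := by
  have hexp : (1:ℝ) < Real.exp (-2 * t) := by
    rw [show (1:ℝ) = Real.exp 0 by simp]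
    exact Real.exp_lt_exp.mpr (by linarith)
  have hsub : 0 < Real.exp (-2 * t) - 1 := by linarith
  have ha2pos : 0 < (Real.exp (-2 * t) - 1)⁻¹ := inv_pos.mpr hsub
  have hA2 : angenentA t ^ 2 = (Real.exp (-2 * t) - 1)⁻¹ :=
    Real.sq_sqrt ha2pos.le
  set A := angenentA t with hA
  have hA2pos : 0 < A ^ 2 := by rw [hA2]; exact ha2pos
  -- key identity : A^2 = exp(2t) * (A^2 + 1)
  have hexp2 : Real.exp (2 * t) * Real.exp (-2 * t) = 1 := by
    rw [← Real.exp_add]; norm_num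
  have he2 : Real.exp (2 * t) = (Real.exp (-2 * t))⁻¹ := by
    rw [← Real.exp_neg]; ring_nf
  have hexp0 : Real.exp (-2 * t) ≠ 0 := (Real.exp_pos _).ne'
  have hkey : A ^ 2 = Real.exp (2 * t) * (A ^ 2 + 1) := by
    have h1 : Real.exp (-(2 * t)) - 1 ≠ 0 := by
      rw [show -(2 * t) = -2 * t by ring]; exact hsub.ne'
    rw [hA2, he2]
    field_simp
    ring
  set s := Real.sqrt (Real.cos θ ^ 2 + A ^ 2) with hsdef
  have hs2 : s ^ 2 = Real.cos θ ^ 2 + A ^ 2 :=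
    Real.sq_sqrt (by positivity)
  have hspos : 0 < s := Real.sqrt_pos.mpr (by positivity)
  have hscos : Real.cos θ < s := by nlinarith [hspos]
  set B := Real.sqrt (A ^ 2 + 1) with hBdef
  have hB2 : B ^ 2 = A ^ 2 + 1 := Real.sq_sqrt (by positivity)
  have hBpos : 0 < B := Real.sqrt_pos.mpr (by positivity)
  have hrpos : 0 < (s - Real.cos θ) / B := by
    apply div_pos (by linarith) hBpos
  -- compute cos of x
  have hcosx : Real.cos (angenentX θ t) = s / B := by
    rw [angenentX, Real.cos_arctan, ← hA, ← hsdef]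
    have h1 : 1 + (Real.sin θ / s) ^ 2 = (A ^ 2 + 1) / s ^ 2 := by
      field_simp
      nlinarith [Real.sin_sq_add_cos_sq θ]
    rw [h1, Real.sqrt_div (by positivity), ← hBdef,
      Real.sqrt_sq hspos.le]
    field_simp
  -- compute cosh of y
  have hexpy : Real.exp (angenentY θ t)
      = Real.exp (-t) * ((s - Real.cos θ) / B) := by
    rw [angenentY, Real.exp_add, ← hA, ← hsdef, ← hBdef, Real.exp_log hrpos]
  have hcoshy : Real.cosh (angenentY θ t)
      = (Real.exp (-t) * ((s - Real.cos θ) / B)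
        + Real.exp t * (B / (s - Real.cos θ))) / 2 := by
    have hscne : s - Real.cos θ ≠ 0 := by linarith
    rw [Real.cosh_eq, Real.exp_neg (angenentY θ t), hexpy, Real.exp_neg t]
    rw [mul_inv, inv_inv, inv_div]
  rw [hcosx, hcoshy]
  have hE : Real.exp t * Real.exp (-t) = 1 := by
    rw [← Real.exp_add]; norm_num
  have hE2 : Real.exp (2 * t) = Real.exp t ^ 2 := by
    rw [two_mul, Real.exp_add, sq]
  have hscne : s - Real.cos θ ≠ 0 := by linarith
  field_simp
  linear_combination (-((s - Real.cos θ) ^ 2)) * hE + (-(Real.exp t ^ 2)) * hB2 +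
    ((A ^ 2 + 1)) * hE2 + hkey + hs2
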